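/- arXiv:2407.21603 — 3 statements merged into one kernel-verified Lean document; each statement's English description precedes it below -/
import Mathlib

section
/- Let β ∈ (1,2) and let w_k^{(β)} be the Grünwald weights. Then k^{β+1} · w_k^{(β)} converges to 1/Γ(−β) as k → ∞; that is, w_k^{(β)} = (1/(Γ(−β) k^{β+1}))·(1 + O(1/k)). -/
open Filter

/-- The Grünwald weights: `w β 0 = 1`, `w β k = (1 - (1+β)/k) * w β (k-1)` for `k ≥ 1`. -/
noncomputable def grunwaldW (β : ℝ) : ℕ → ℝ
  | 0 => 1
  | k + 1 => (1 - (1 + β) / ((k : ℝ) + 1)) * grunwaldW β k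

lemma grunwaldW_eq (β : ℝ) (k : ℕ) :
    grunwaldW β k = (∏ j ∈ Finset.range k, ((j : ℝ) - β)) / (k.factorial : ℝ) := by
  induction k with
  | zero => simp [grunwaldW]
  | succ k ih =>
    have hk1 : ((k : ℝ) + 1) ≠ 0 := by positivity
    have hf : ((k.factorial : ℝ)) ≠ 0 := by exact_mod_cast k.factorial_ne_zero
    rw [grunwaldW, ih, Finset.prod_range_succ, Nat.factorial_succ]
    push_cast
    field_simp
    ring

theorem grunwald_weights_asymptotics (β : ℝ) (hβ1 : 1 < β) (hβ2 : β < 2) :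
    Tendsto (fun k : ℕ => (k : ℝ) ^ (β + 1) * grunwaldW β k) atTop
      (nhds (1 / Real.Gamma (-β))) := by
  have hβnat : ∀ m : ℕ, β ≠ (m : ℝ) := by
    intro m h
    rcases le_or_gt m 1 with hm | hm
    · have : (m : ℝ) ≤ 1 := by exact_mod_cast hm
      linarith
    · have : (2 : ℝ) ≤ (m : ℝ) := by exact_mod_cast hm
      linarith
  have hΓ : Real.Gamma (-β) ≠ 0 := by
    refine Real.Gamma_ne_zero fun m => ?_
    intro h
    exact hβnat m (by linarith [neg_injective h])
  have hG : Tendsto (Real.GammaSeq (-β)) atTop (nhds (Real.Gamma (-β))) :=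
    Real.GammaSeq_tendsto_Gamma (-β)
  have hβk : Tendsto (fun k : ℕ => β / (k : ℝ)) atTop (nhds 0) :=
    tendsto_const_div_atTop_nhds_zero_nat β
  have hlim : Tendsto (fun k : ℕ => (1 - β / (k : ℝ))⁻¹ * (Real.GammaSeq (-β) k)⁻¹) atTop
      (nhds (1 / Real.Gamma (-β))) := by
    have := ((tendsto_const_nhds.sub hβk).inv₀ (show (1:ℝ) - 0 ≠ 0 by norm_num)).mul (hG.inv₀ hΓ)
    simpa using this
  refine hlim.congr' ?_
  filter_upwards [eventually_ge_atTop 1] with k hk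
  have hk0 : (0 : ℝ) < (k : ℝ) := by exact_mod_cast hk
  set P := ∏ j ∈ Finset.range k, ((j : ℝ) - β) with hPdef
  have hP1 : ∏ j ∈ Finset.range (k + 1), (-β + (j : ℝ)) = P * ((k : ℝ) - β) := by
    rw [Finset.prod_range_succ]
    have h : ∀ x : ℝ, -β + x = x - β := fun x => by ring
    simp_rw [h]
    rw [hPdef]
  have hPne : P ≠ 0 := by
    rw [hPdef, Finset.prod_ne_zero_iff]
    intro j _ h
    have h2 : (j : ℝ) = β := by linarith [sub_eq_zero.mp h]
    exact hβnat j h2.symm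
  have hkβ : (k : ℝ) - β ≠ 0 := by
    intro h
    have : β = (k : ℝ) := by linarith
    exact hβnat k this
  have hf : ((k.factorial : ℝ)) ≠ 0 := by exact_mod_cast k.factorial_ne_zero
  have hkβ' : 1 - β / (k : ℝ) ≠ 0 := by
    intro h
    apply hkβ
    field_simp at h
    linarith
  have hrpow : (k : ℝ) ^ (β + 1) = (k : ℝ) ^ β * k := by
    rw [Real.rpow_add hk0, Real.rpow_one]
  have hpowne : (k : ℝ) ^ β ≠ 0 := (Real.rpow_pos_of_pos hk0 β).ne'
  rw [Real.GammaSeq, hP1, grunwaldW_eq, Real.rpow_neg hk0.le, hrpow]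
  field_simp
  ring
end

section
/- Let Δt > 0, h > 0, β ∈ (1,2), let (g_k)_{k≥0} be a sequence of real numbers and ρ a real number such that g_1 < 0, g_0 + g_2 > 0, g_k > 0 for all k ≥ 3, and ∑_{k=0}^∞ g_k converges to ρ. For N ≥ 2, define the symmetric Toeplitz matrix G ∈ ℝ^{N×N} by G_{ij} = (Δt/(2h^β)) · a_{|i−j|}, where a_0 = 2(ρ − g_1), a_1 = −(g_0 + g_2), and a_m = −g_{m+1} for 2 ≤ m ≤ N−1. Then G has positive diagonal entries, is strictly diagonally dominant by rows, and is symmetric positive definite. -/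
open Finset Matrix

/-- A real symmetric strictly diagonally dominant matrix (by rows) is positive definite. -/
lemma posDef_of_sdd {n : Type*} [Fintype n] [DecidableEq n] (A : Matrix n n ℝ)
    (hsym : A.IsHermitian)
    (hdd : ∀ i, ∑ j ∈ Finset.univ.erase i, |A i j| < A i i) : A.PosDef := by
  refine Matrix.posDef_iff_dotProduct_mulVec.mpr ⟨hsym, fun x hx => ?_⟩
  have hsymm : ∀ i j, A j i = A i j := fun i j => by
    have := congrFun (congrFun hsym i) j
    simpa [Matrix.conjTranspose_apply] using this
  -- pointwise AM-GM bound
  have hpt : ∀ i j : n, -(|A i j| * (x i ^ 2 + x j ^ 2) / 2) ≤ x i * (A i j * x j) := by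
    intro i j
    have h1 : |x i * (A i j * x j)| ≤ |A i j| * (x i ^ 2 + x j ^ 2) / 2 := by
      rw [abs_mul, abs_mul]
      nlinarith [two_mul_le_add_sq (|x i|) (|x j|), sq_abs (x i), sq_abs (x j),
        abs_nonneg (A i j), abs_nonneg (x i), abs_nonneg (x j),
        mul_nonneg (abs_nonneg (x i)) (abs_nonneg (x j))]
    linarith [neg_abs_le (x i * (A i j * x j))]
  -- symmetrization of the double sum
  have hswap : ∑ i, ∑ j ∈ univ.erase i, |A i j| * x j ^ 2
      = ∑ i, (∑ j ∈ univ.erase i, |A i j|) * x i ^ 2 := by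
    rw [Finset.sum_comm' (s := (univ : Finset n)) (t := fun i => univ.erase i)
      (t' := (univ : Finset n)) (s' := fun j => univ.erase j)
      (fun a b => by simp [Finset.mem_erase, ne_comm, eq_comm])]
    refine Finset.sum_congr rfl fun j _ => ?_
    rw [Finset.sum_mul]
    exact Finset.sum_congr rfl fun i _ => by rw [hsymm j i]
  have hS : ∑ i, ∑ j ∈ univ.erase i, |A i j| * (x i ^ 2 + x j ^ 2) / 2
      = ∑ i, (∑ j ∈ univ.erase i, |A i j|) * x i ^ 2 := by
    have step : ∀ i : n, ∑ j ∈ univ.erase i, |A i j| * (x i ^ 2 + x j ^ 2) / 2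
        = (∑ j ∈ univ.erase i, |A i j| * x i ^ 2) / 2
          + (∑ j ∈ univ.erase i, |A i j| * x j ^ 2) / 2 := by
      intro i
      rw [← Finset.sum_div, ← add_div, ← Finset.sum_add_distrib]
      congr 1
      exact Finset.sum_congr rfl fun j _ => by ring
    have e1 : ∑ i, ∑ j ∈ univ.erase i, |A i j| * x i ^ 2
        = ∑ i, (∑ j ∈ univ.erase i, |A i j|) * x i ^ 2 :=
      Finset.sum_congr rfl fun i _ => (Finset.sum_mul _ _ _).symm
    calc ∑ i, ∑ j ∈ univ.erase i, |A i j| * (x i ^ 2 + x j ^ 2) / 2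
        = ∑ i, ((∑ j ∈ univ.erase i, |A i j| * x i ^ 2) / 2
            + (∑ j ∈ univ.erase i, |A i j| * x j ^ 2) / 2) :=
          Finset.sum_congr rfl fun i _ => step i
      _ = (∑ i, ∑ j ∈ univ.erase i, |A i j| * x i ^ 2) / 2
            + (∑ i, ∑ j ∈ univ.erase i, |A i j| * x j ^ 2) / 2 := by
          rw [Finset.sum_add_distrib, Finset.sum_div, Finset.sum_div]
      _ = ∑ i, (∑ j ∈ univ.erase i, |A i j|) * x i ^ 2 := by
          rw [e1, hswap]; ring
  -- expansion of the quadratic form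
  have expand : x ⬝ᵥ A *ᵥ x
      = ∑ i, (A i i * x i ^ 2 + ∑ j ∈ univ.erase i, x i * (A i j * x j)) := by
    simp only [dotProduct, Matrix.mulVec]
    refine Finset.sum_congr rfl fun i _ => ?_
    rw [← Finset.add_sum_erase _ _ (Finset.mem_univ i), mul_add, Finset.mul_sum]
    ring_nf
  have hmain : ∑ i, (A i i - ∑ j ∈ univ.erase i, |A i j|) * x i ^ 2 ≤ x ⬝ᵥ A *ᵥ x := by
    have hbd : ∀ i : n, -∑ j ∈ univ.erase i, |A i j| * (x i ^ 2 + x j ^ 2) / 2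
        ≤ ∑ j ∈ univ.erase i, x i * (A i j * x j) := by
      intro i
      have := Finset.sum_le_sum (s := univ.erase i)
        (f := fun j => -(|A i j| * (x i ^ 2 + x j ^ 2) / 2))
        (g := fun j => x i * (A i j * x j)) (fun j _ => hpt i j)
      rwa [Finset.sum_neg_distrib] at this
    have h2 : ∑ i, (A i i * x i ^ 2 - ∑ j ∈ univ.erase i, |A i j| * (x i ^ 2 + x j ^ 2) / 2)
        ≤ ∑ i, (A i i * x i ^ 2 + ∑ j ∈ univ.erase i, x i * (A i j * x j)) :=
      Finset.sum_le_sum fun i _ => by linarith [hbd i]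
    have h3 : ∑ i, (A i i - ∑ j ∈ univ.erase i, |A i j|) * x i ^ 2
        = ∑ i, (A i i * x i ^ 2 - ∑ j ∈ univ.erase i, |A i j| * (x i ^ 2 + x j ^ 2) / 2) := by
      have l1 : ∑ i, (A i i - ∑ j ∈ univ.erase i, |A i j|) * x i ^ 2
          = ∑ i, A i i * x i ^ 2 - ∑ i, (∑ j ∈ univ.erase i, |A i j|) * x i ^ 2 := by
        rw [← Finset.sum_sub_distrib]
        exact Finset.sum_congr rfl fun i _ => by ring
      rw [l1, ← hS, ← Finset.sum_sub_distrib]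
    rw [expand, h3]; exact h2
  have hpos : 0 < ∑ i, (A i i - ∑ j ∈ univ.erase i, |A i j|) * x i ^ 2 := by
    obtain ⟨k, hk⟩ : ∃ k, x k ≠ 0 := Function.ne_iff.mp hx
    refine Finset.sum_pos' (fun i _ => ?_) ⟨k, Finset.mem_univ k, ?_⟩
    · exact mul_nonneg (sub_nonneg.mpr (hdd i).le) (sq_nonneg _)
    · exact mul_pos (sub_pos.mpr (hdd k)) (by positivity)
  have : (0:ℝ) < x ⬝ᵥ A *ᵥ x := lt_of_lt_of_le hpos hmain
  simpa [dotProduct] using this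

/-- The symmetric Toeplitz discretization matrix `G` with entries
`G i j = (Δt/(2 h^β)) a_{|i-j|}`, where `a 0 = 2(ρ - g 1)`, `a 1 = -(g 0 + g 2)`,
and `a m = -g (m+1)` for `m ≥ 2`. -/
noncomputable def toeplitzG (Δt hstep β : ℝ) (g : ℕ → ℝ) (ρ : ℝ) (N : ℕ) :
    Matrix (Fin N) (Fin N) ℝ :=
  Matrix.of fun i j =>
    Δt / (2 * hstep ^ β) *
      (if ((i : ℤ) - (j : ℤ)).natAbs = 0 then 2 * (ρ - g 1)
       else if ((i : ℤ) - (j : ℤ)).natAbs = 1 then -(g 0 + g 2)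
       else -g (((i : ℤ) - (j : ℤ)).natAbs + 1))

theorem discretization_matrix_spd (Δt hstep β : ℝ) (hΔt : 0 < Δt) (hh : 0 < hstep)
    (hβ1 : 1 < β) (hβ2 : β < 2) (g : ℕ → ℝ) (ρ : ℝ)
    (hg1 : g 1 < 0) (hg02 : 0 < g 0 + g 2) (hgk : ∀ k : ℕ, 3 ≤ k → 0 < g k)
    (hsum : HasSum g ρ) (N : ℕ) (hN : 2 ≤ N) :
    (∀ i : Fin N, 0 < toeplitzG Δt hstep β g ρ N i i) ∧
    (∀ i : Fin N,
      ∑ j ∈ Finset.univ.erase i, |toeplitzG Δt hstep β g ρ N i j| <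
        |toeplitzG Δt hstep β g ρ N i i|) ∧
    (toeplitzG Δt hstep β g ρ N).PosDef := by
  set c : ℝ := Δt / (2 * hstep ^ β) with hc_def
  have hc : 0 < c := by
    apply div_pos hΔt
    have := Real.rpow_pos_of_pos hh β
    positivity
  set w : ℕ → ℝ := fun m => if m = 1 then g 0 + g 2 else g (m + 1) with hw_def
  have hw : ∀ m : ℕ, 1 ≤ m → 0 < w m := by
    intro m hm
    by_cases h1 : m = 1
    · simp [hw_def, h1, hg02]
    · have : 3 ≤ m + 1 := by omega
      simp only [hw_def, if_neg h1]
      exact hgk _ this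
  -- tail sum
  have htail : HasSum (fun n => g (n + 3)) (ρ - (g 0 + g 1 + g 2)) := by
    refine (hasSum_nat_add_iff 3).2 ?_
    have h3 : ∑ i ∈ Finset.range 3, g i = g 0 + g 1 + g 2 := by
      simp [Finset.sum_range_succ]
    rw [h3]; simpa using hsum
  have htail_nonneg : 0 ≤ ρ - (g 0 + g 1 + g 2) := by
    have := htail.tsum_eq
    rw [← this]
    exact tsum_nonneg fun n => (hgk (n + 3) (by omega)).le
  have hρg1 : 0 < ρ - g 1 := by linarith
  -- diagonal entries
  have hdiag : ∀ i : Fin N, toeplitzG Δt hstep β g ρ N i i = c * (2 * (ρ - g 1)) := by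
    intro i
    simp [toeplitzG, hc_def]
  have hdiag_pos : ∀ i : Fin N, 0 < toeplitzG Δt hstep β g ρ N i i := by
    intro i; rw [hdiag i]; positivity
  -- off-diagonal entries
  have habs : ∀ i j : Fin N, j ≠ i →
      |toeplitzG Δt hstep β g ρ N i j| = c * w (((i : ℤ) - (j : ℤ)).natAbs) := by
    intro i j hij
    have hd0 : ((i : ℤ) - (j : ℤ)).natAbs ≠ 0 := by
      intro h
      apply hij
      have hiv : (i : ℤ) = (i.val : ℤ) := rfl
      have hjv : (j : ℤ) = (j.val : ℤ) := rfl
      have : j.val = i.val := by rw [hiv, hjv] at h; omega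
      exact Fin.ext this
    have hentry : toeplitzG Δt hstep β g ρ N i j
        = c * (-(w (((i : ℤ) - (j : ℤ)).natAbs))) := by
      simp only [toeplitzG, Matrix.of_apply, if_neg hd0, hw_def, hc_def]
      by_cases h1 : ((i : ℤ) - (j : ℤ)).natAbs = 1
      · rw [if_pos h1, if_pos h1]
      · rw [if_neg h1, if_neg h1]
    rw [hentry, abs_mul, abs_neg, abs_of_pos hc,
      abs_of_pos (hw _ (Nat.one_le_iff_ne_zero.mpr hd0))]
  -- the key scalar bound
  have hIcc_lt : ∑ m ∈ Finset.Icc 1 (N - 1), w m < ρ - g 1 := by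
    have h1mem : (1 : ℕ) ∈ Finset.Icc 1 (N - 1) := by
      rw [Finset.mem_Icc]; omega
    have hsplit : Finset.Icc 1 (N - 1) = insert 1 (Finset.Icc 2 (N - 1)) := by
      ext m
      simp only [Finset.mem_Icc, Finset.mem_insert]
      omega
    have h1not : (1 : ℕ) ∉ Finset.Icc 2 (N - 1) := by
      rw [Finset.mem_Icc]; omega
    rw [hsplit, Finset.sum_insert h1not]
    have hw1 : w 1 = g 0 + g 2 := by simp [hw_def]
    have hrest : ∑ m ∈ Finset.Icc 2 (N - 1), w m = ∑ n ∈ Finset.range (N - 2), g (n + 3) := by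
      have hIco : Finset.Icc 2 (N - 1) = Finset.Ico 2 N := by
        ext m; simp only [Finset.mem_Icc, Finset.mem_Ico]; omega
      rw [hIco, Finset.sum_Ico_eq_sum_range]
      refine Finset.sum_congr rfl fun n hn => ?_
      have : 2 + n ≠ 1 := by omega
      simp only [hw_def, if_neg this]
      congr 1
      omega
    have hlt : ∑ n ∈ Finset.range (N - 2), g (n + 3) < ρ - (g 0 + g 1 + g 2) := by
      have hle : ∑ n ∈ Finset.range (N - 1), g (n + 3) ≤ ρ - (g 0 + g 1 + g 2) := by
        rw [← htail.tsum_eq]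
        exact Summable.sum_le_tsum _ (fun n _ => (hgk _ (by omega)).le) htail.summable
      have heq : N - 1 = (N - 2) + 1 := by omega
      rw [heq, Finset.sum_range_succ] at hle
      have := hgk ((N - 2) + 3) (by omega)
      linarith
    rw [hw1, hrest]
    linarith
  -- row sums
  have hrow : ∀ i : Fin N,
      ∑ j ∈ Finset.univ.erase i, |toeplitzG Δt hstep β g ρ N i j| <
        |toeplitzG Δt hstep β g ρ N i i| := by
    intro i
    set d : Fin N → ℕ := fun j => ((i : ℤ) - (j : ℤ)).natAbs with hd_def
    have hdval : ∀ j : Fin N, d j = ((i.val : ℤ) - (j.val : ℤ)).natAbs := fun j => rfl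
    have bnd : ∀ s : Finset (Fin N),
        (∀ j1 ∈ s, ∀ j2 ∈ s, d j1 = d j2 → j1 = j2) →
        (∀ j ∈ s, d j ∈ Finset.Icc 1 (N - 1)) →
        ∑ j ∈ s, w (d j) ≤ ∑ m ∈ Finset.Icc 1 (N - 1), w m := by
      intro s hinj hmem
      rw [← Finset.sum_image hinj]
      refine Finset.sum_le_sum_of_subset_of_nonneg ?_ ?_
      · intro m hm
        obtain ⟨j, hj, rfl⟩ := Finset.mem_image.mp hm
        exact hmem j hj
      · intro m hm _
        exact (hw m (Finset.mem_Icc.mp hm).1).le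
    have hsum_bound : ∑ j ∈ Finset.univ.erase i, w (d j)
        ≤ 2 * ∑ m ∈ Finset.Icc 1 (N - 1), w m := by
      rw [← Finset.sum_filter_add_sum_filter_not (Finset.univ.erase i)
        (fun j : Fin N => (j : ℕ) < (i : ℕ))]
      have b1 : ∑ j ∈ (Finset.univ.erase i).filter (fun j : Fin N => (j : ℕ) < (i : ℕ)),
          w (d j) ≤ ∑ m ∈ Finset.Icc 1 (N - 1), w m := by
        refine bnd _ ?_ ?_
        · intro j1 hj1 j2 hj2 heq
          simp only [Finset.mem_filter, Finset.mem_erase] at hj1 hj2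
          rw [hdval, hdval] at heq
          exact Fin.ext (by omega)
        · intro j hj
          simp only [Finset.mem_filter, Finset.mem_erase] at hj
          rw [Finset.mem_Icc, hdval]
          have := j.isLt
          have := i.isLt
          omega
      have b2 : ∑ j ∈ (Finset.univ.erase i).filter (fun j : Fin N => ¬ (j : ℕ) < (i : ℕ)),
          w (d j) ≤ ∑ m ∈ Finset.Icc 1 (N - 1), w m := by
        refine bnd _ ?_ ?_
        · intro j1 hj1 j2 hj2 heq
          simp only [Finset.mem_filter, Finset.mem_erase] at hj1 hj2
          rw [hdval, hdval] at heq
          have h1 : j1.val ≠ i.val := fun h => hj1.1.1 (Fin.ext h)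
          have h2 : j2.val ≠ i.val := fun h => hj2.1.1 (Fin.ext h)
          exact Fin.ext (by omega)
        · intro j hj
          simp only [Finset.mem_filter, Finset.mem_erase] at hj
          rw [Finset.mem_Icc, hdval]
          have := j.isLt
          have := i.isLt
          have h1 : j.val ≠ i.val := fun h => hj.1.1 (Fin.ext h)
          omega
      linarith
    have lhs_eq : ∑ j ∈ Finset.univ.erase i, |toeplitzG Δt hstep β g ρ N i j|
        = c * ∑ j ∈ Finset.univ.erase i, w (d j) := by
      rw [Finset.mul_sum]
      refine Finset.sum_congr rfl fun j hj => ?_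
      exact habs i j (Finset.ne_of_mem_erase hj)
    have rhs_eq : |toeplitzG Δt hstep β g ρ N i i| = c * (2 * (ρ - g 1)) := by
      rw [hdiag i, abs_of_pos (by positivity)]
    rw [lhs_eq, rhs_eq]
    have : ∑ j ∈ Finset.univ.erase i, w (d j) < 2 * (ρ - g 1) := by
      calc ∑ j ∈ Finset.univ.erase i, w (d j) ≤ 2 * ∑ m ∈ Finset.Icc 1 (N - 1), w m :=
            hsum_bound
        _ < 2 * (ρ - g 1) := by linarith
    exact mul_lt_mul_of_pos_left this hc
  -- symmetry
  have hherm : (toeplitzG Δt hstep β g ρ N).IsHermitian := by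
    show (toeplitzG Δt hstep β g ρ N)ᴴ = toeplitzG Δt hstep β g ρ N
    ext i j
    simp only [Matrix.conjTranspose_apply, star_trivial, toeplitzG, Matrix.of_apply]
    have hab : ((j : ℤ) - (i : ℤ)).natAbs = ((i : ℤ) - (j : ℤ)).natAbs := by omega
    rw [hab]
  refine ⟨hdiag_pos, hrow, ?_⟩
  apply posDef_of_sdd _ hherm
  intro i
  have := hrow i
  rwa [abs_of_pos (hdiag_pos i)] at this
end

section
/- Let β ∈ (1,2), λ ≥ 0, h > 0, and let γ1, γ2, γ3 be arbitrary real numbers. Then the series of tempered WSGD weights converges absolutely and ∑_{k=0}^∞ g_k^{(β)} = (γ1 e^{hλ} + γ2 + γ3 e^{−hλ})·(1 − e^{−hλ})^β = ρ_β. -/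
/-- The tempered WSGD weights `g_k^{(β)}`. -/
noncomputable def temperedG (β lam h γ1 γ2 γ3 : ℝ) : ℕ → ℝ
  | 0 => γ1 * Real.exp (h * lam)
  | 1 => γ1 * grunwaldW β 1 + γ2
  | k + 2 =>
      (γ1 * grunwaldW β (k + 2) + γ2 * grunwaldW β (k + 1) + γ3 * grunwaldW β k) *
        Real.exp (-(((k : ℝ) + 1) * (h * lam)))


lemma w_zero (β : ℝ) : grunwaldW β 0 = 1 := rfl
lemma w_succ (β : ℝ) (k : ℕ) :
    grunwaldW β (k+1) = (1 - (1 + β) / ((k : ℝ) + 1)) * grunwaldW β k := rfl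

lemma w_eq_u (β : ℝ) (n : ℕ) :
    grunwaldW β (n+1) = (-β / ((n:ℝ)+1)) * grunwaldW (β-1) n := by
  induction n with
  | zero => norm_num [grunwaldW]
  | succ n ih =>
    have h1 : ((n:ℝ)+1) ≠ 0 := by positivity
    have h2 : ((n:ℝ)+1+1) ≠ 0 := by positivity
    rw [w_succ, ih, w_succ]
    push_cast
    field_simp
    ring

lemma sum_w (β : ℝ) (n : ℕ) :
    ∑ k ∈ Finset.range (n+1), grunwaldW β k = grunwaldW (β-1) n := by
  induction n with
  | zero => simp [grunwaldW]
  | succ n ih =>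
    rw [Finset.sum_range_succ, ih, w_eq_u, w_succ]
    have h1 : ((n:ℝ)+1) ≠ 0 := by positivity
    field_simp
    ring

lemma u_bounds (β : ℝ) (hβ1 : 1 < β) (hβ2 : β < 2) :
    ∀ n : ℕ, 1 ≤ n → -((β-1)/n) ≤ grunwaldW (β-1) n ∧ grunwaldW (β-1) n ≤ 0 := by
  intro n hn
  induction n, hn using Nat.le_induction with
  | base =>
    norm_num [grunwaldW]
    linarith
  | succ n hn ih =>
    obtain ⟨ih1, ih2⟩ := ih
    have hn' : (1:ℝ) ≤ (n:ℝ) := by exact_mod_cast hn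
    have h1 : (0:ℝ) < (n:ℝ) := by linarith
    have h2 : (0:ℝ) < (n:ℝ) + 1 := by linarith
    have hc : grunwaldW (β-1) (n+1) = (((n:ℝ)+1-β)/((n:ℝ)+1)) * grunwaldW (β-1) n := by
      rw [w_succ]
      have : (1:ℝ) + (β-1) = β := by ring
      rw [this]
      field_simp
    have hc0 : 0 ≤ ((n:ℝ)+1-β)/((n:ℝ)+1) := by
      apply div_nonneg <;> linarith
    have hc1 : ((n:ℝ)+1-β)/((n:ℝ)+1) ≤ 1 := by
      rw [div_le_one h2]; linarith
    constructor
    · rw [hc]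
      have : (((n:ℝ)+1-β)/((n:ℝ)+1)) * (-((β-1)/n)) ≤ (((n:ℝ)+1-β)/((n:ℝ)+1)) * grunwaldW (β-1) n :=
        mul_le_mul_of_nonneg_left ih1 hc0
      refine le_trans ?_ this
      push_cast
      rw [mul_neg, neg_le_neg_iff, div_mul_div_comm, div_le_div_iff₀ (by positivity) (by positivity)]
      nlinarith [mul_nonneg (mul_nonneg (le_of_lt (sub_pos.mpr hβ1)) (le_of_lt (sub_pos.mpr hβ1))) (le_of_lt h2)]
    · rw [hc]
      exact mul_nonpos_of_nonneg_of_nonpos hc0 ih2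

lemma w_bounds (β : ℝ) (hβ1 : 1 < β) (hβ2 : β < 2) (n : ℕ) (hn : 1 ≤ n) :
    0 ≤ grunwaldW β (n+1) ∧ grunwaldW β (n+1) ≤ β*(β-1)/(((n:ℝ)+1)*n) := by
  obtain ⟨h1, h2⟩ := u_bounds β hβ1 hβ2 n hn
  have hn' : (1:ℝ) ≤ (n:ℝ) := by exact_mod_cast hn
  have hb : (0:ℝ) < β := by linarith
  rw [w_eq_u]
  constructor
  · rw [neg_div, neg_mul]
    apply neg_nonneg.mpr
    apply mul_nonpos_of_nonneg_of_nonpos (by positivity) h2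
  · have : -β / ((n:ℝ)+1) * grunwaldW (β-1) n ≤ -β / ((n:ℝ)+1) * (-((β-1)/n)) := by
      apply mul_le_mul_of_nonpos_left h1
      rw [neg_div, neg_nonpos]
      positivity
    refine le_trans this (le_of_eq ?_)
    field_simp

set_option maxHeartbeats 1000000 in
lemma summable_abs_w (β : ℝ) (hβ1 : 1 < β) (hβ2 : β < 2) :
    Summable (fun k : ℕ => |grunwaldW β k|) := by
  apply (summable_nat_add_iff (f := fun k : ℕ => |grunwaldW β k|) 2).mp
  have hb : (0:ℝ) < β := by linarith
  refine Summable.of_nonneg_of_le (f := fun k : ℕ => β*(β-1) * (1/((k:ℝ)+1)^2))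
    (fun k => abs_nonneg _) ?_ ?_
  · intro k
    obtain ⟨h1, h2⟩ := w_bounds β hβ1 hβ2 (k+1) (Nat.le_add_left 1 k)
    rw [abs_of_nonneg h1]
    push_cast at h2 ⊢
    calc grunwaldW β (k+2) ≤ β*(β-1)/(((k:ℝ)+1+1)*((k:ℝ)+1)) := by
          convert h2 using 3 <;> ring
      _ ≤ β*(β-1) * (1/((k:ℝ)+1)^2) := by
          rw [mul_one_div]
          gcongr
          · nlinarith
  · apply Summable.mul_left
    have := (summable_nat_add_iff (f := fun k : ℕ => 1/((k:ℝ))^2) 1).mpr ?_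
    · convert this using 2 with k
      push_cast
      rfl
      push_cast
      rfl
    · norm_num [Real.summable_one_div_nat_pow]

lemma hasDerivAt_one_sub_rpow (c t : ℝ) (ht : t < 1) :
    HasDerivAt (fun x : ℝ => (1-x)^c) (-(c * (1-t)^(c-1))) t := by
  have h1 : (1:ℝ) - t ≠ 0 := by intro h; nlinarith [h]
  have := (Real.hasDerivAt_rpow_const (x := 1-t) (p := c) (Or.inl h1)).comp t
    ((hasDerivAt_id t).const_sub 1)
  exact this.congr_deriv (by ring)

noncomputable def grunJ (β z : ℝ) (n : ℕ) : ℝ :=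
  ∫ t in (0:ℝ)..z, (1-t)^(β-(n:ℝ)-1) * (z-t)^n

lemma contOn_integrand (β z : ℝ) (c : ℝ) (hz1 : z < 1) (n : ℕ) :
    IntervalIntegrable (fun t : ℝ => (1-t)^c * (z-t)^n) MeasureTheory.volume 0 z := by
  apply ContinuousOn.intervalIntegrable
  apply ContinuousOn.mul
  · apply ContinuousOn.rpow_const (by fun_prop)
    intro t ht
    left
    rw [Set.uIcc_comm] at ht
    have := (Set.mem_uIcc.mp ht)
    rcases this with ⟨h1, h2⟩ | ⟨h1, h2⟩ <;> intro h <;> nlinarith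
  · fun_prop

lemma grunJ_zero (β z : ℝ) (hβ1 : 1 < β) (hz0 : 0 ≤ z) (hz1 : z < 1) :
    grunJ β z 0 = (1 - (1-z)^β) / β := by
  have hβ : (0:ℝ) < β := by linarith
  have key : ∫ t in (0:ℝ)..z, (1-t)^(β-1) =
      -((1-z)^β/β) - -((1-(0:ℝ))^β/β) := by
    apply intervalIntegral.integral_eq_sub_of_hasDerivAt
    · intro t ht
      rw [Set.uIcc_of_le hz0] at ht
      have ht1 : t < 1 := lt_of_le_of_lt ht.2 hz1
      have := ((hasDerivAt_one_sub_rpow β t ht1).div_const β)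
      apply HasDerivAt.congr_deriv (this.neg)
      field_simp
    · have := contOn_integrand β z (β-1) hz1 0
      simpa using this
  unfold grunJ
  simp only [Nat.cast_zero, pow_zero, mul_one]
  rw [show β - 0 - 1 = β - 1 by ring, key,
    show (1:ℝ)-0 = 1 by norm_num, Real.one_rpow]
  field_simp
  ring

lemma beta_sub_ne (β : ℝ) (hβ1 : 1 < β) (hβ2 : β < 2) (n : ℕ) : β - (n:ℝ) - 1 ≠ 0 := by
  rcases n with _ | m
  · push_cast; intro h; linarith
  · have h1 : (0:ℝ) ≤ (m:ℝ) := Nat.cast_nonneg m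
    push_cast; intro h; linarith

lemma grunJ_succ (β z : ℝ) (hβ1 : 1 < β) (hβ2 : β < 2) (hz0 : 0 ≤ z) (hz1 : z < 1) (n : ℕ) :
    grunJ β z (n+1)
      = z^(n+1)/(β-(n:ℝ)-1) - (((n:ℝ)+1)/(β-(n:ℝ)-1)) * grunJ β z n := by
  set c := β - (n:ℝ) - 1 with hc
  have hc0 : c ≠ 0 := beta_sub_ne β hβ1 hβ2 n
  have hu : ∀ t ∈ Set.uIcc (0:ℝ) z, HasDerivAt (fun t : ℝ => (z-t)^(n+1))
      (-(((n:ℝ)+1) * (z-t)^n)) t := by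
    intro t _
    have h1 := (hasDerivAt_pow (n+1) (z-t)).comp t ((hasDerivAt_id t).const_sub z)
    apply h1.congr_deriv
    push_cast
    ring
  have hv : ∀ t ∈ Set.uIcc (0:ℝ) z, HasDerivAt (fun t : ℝ => -((1-t)^c/c))
      ((1-t)^(c-1)) t := by
    intro t ht
    rw [Set.uIcc_of_le hz0] at ht
    have ht1 : t < 1 := lt_of_le_of_lt ht.2 hz1
    have := ((hasDerivAt_one_sub_rpow c t ht1).div_const c).neg
    apply this.congr_deriv
    field_simp
  have hu' : IntervalIntegrable (fun t : ℝ => -(((n:ℝ)+1) * (z-t)^n))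
      MeasureTheory.volume 0 z := by
    apply ContinuousOn.intervalIntegrable; fun_prop
  have hv' : IntervalIntegrable (fun t : ℝ => (1-t)^(c-1)) MeasureTheory.volume 0 z := by
    have := contOn_integrand β z (c-1) hz1 0
    simpa using this
  have key := intervalIntegral.integral_mul_deriv_eq_deriv_mul hu hv hu' hv'
  have e1 : grunJ β z (n+1) = ∫ t in (0:ℝ)..z, (z-t)^(n+1) * (1-t)^(c-1) := by
    unfold grunJ
    apply intervalIntegral.integral_congr
    intro t _
    push_cast
    rw [show β - ((n:ℝ)+1) - 1 = c - 1 by rw [hc]; ring]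
    ring
  have e2 : (∫ t in (0:ℝ)..z, (-(((n:ℝ)+1) * (z-t)^n)) * (-((1-t)^c/c)))
      = (((n:ℝ)+1)/c) * grunJ β z n := by
    unfold grunJ
    rw [← intervalIntegral.integral_const_mul]
    apply intervalIntegral.integral_congr
    intro t _
    rw [← hc]
    field_simp
  rw [e1, key, e2]
  simp only [sub_self, sub_zero, Real.one_rpow]
  rw [zero_pow (Nat.succ_ne_zero n)]
  field_simp
  ring

lemma taylor_id (β z : ℝ) (hβ1 : 1 < β) (hβ2 : β < 2) (hz0 : 0 ≤ z) (hz1 : z < 1) (n : ℕ) :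
    (1-z)^β = (∑ k ∈ Finset.range (n+1), grunwaldW β k * z^k)
      + ((n:ℝ)+1) * grunwaldW β (n+1) * grunJ β z n := by
  induction n with
  | zero =>
    rw [grunJ_zero β z hβ1 hz0 hz1]
    have hw1 : grunwaldW β 1 = -β := by norm_num [grunwaldW]
    have hβ : (0:ℝ) < β := by linarith
    rw [hw1]
    simp [grunwaldW]
    field_simp
    ring
  | succ n ih =>
    rw [Finset.sum_range_succ, grunJ_succ β z hβ1 hβ2 hz0 hz1 n]
    have hc0 : β - (n:ℝ) - 1 ≠ 0 := beta_sub_ne β hβ1 hβ2 n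
    have hw : grunwaldW β (n+2) = (((n:ℝ)+1-β)/((n:ℝ)+2)) * grunwaldW β (n+1) := by
      rw [w_succ]
      push_cast
      field_simp
      ring
    rw [ih]
    push_cast
    rw [hw]
    field_simp
    ring

lemma grunJ_bound (β z : ℝ) (hβ1 : 1 < β) (hz0 : 0 ≤ z) (hz1 : z < 1) (n : ℕ) :
    |grunJ β z n| ≤ z^n * z := by
  have key : ∀ t ∈ Set.uIoc (0:ℝ) z, ‖(1-t)^(β-(n:ℝ)-1) * (z-t)^n‖ ≤ z^n := by
    intro t ht
    rw [Set.uIoc_of_le hz0] at ht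
    obtain ⟨ht0, htz⟩ := ht
    have ht1 : (0:ℝ) < 1 - t := by linarith
    have hsplit : (1-t)^(β-(n:ℝ)-1) = (1-t)^(β-1) * ((1-t)^n)⁻¹ := by
      rw [← Real.rpow_natCast (1-t) n, ← Real.rpow_neg (le_of_lt ht1),
        ← Real.rpow_add ht1]
      ring_nf
    rw [Real.norm_eq_abs, hsplit]
    have h2 : (1-t)^(β-1) * ((1-t)^n)⁻¹ * (z-t)^n
        = (1-t)^(β-1) * ((z-t)/(1-t))^n := by
      rw [div_pow]; ring
    rw [h2, abs_of_nonneg]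
    · have hb1 : (1-t)^(β-1) ≤ 1 :=
        Real.rpow_le_one (by linarith) (by linarith) (by linarith)
      have hb2 : ((z-t)/(1-t))^n ≤ z^n := by
        apply pow_le_pow_left₀ (by apply div_nonneg <;> linarith)
        rw [div_le_iff₀ ht1]
        nlinarith
      calc (1-t)^(β-1) * ((z-t)/(1-t))^n ≤ 1 * ((z-t)/(1-t))^n := by
            exact mul_le_mul_of_nonneg_right hb1 (pow_nonneg (div_nonneg (by linarith) (by linarith)) n)
        _ ≤ z^n := by rw [one_mul]; exact hb2
    · have : 0 ≤ (z-t)/(1-t) := by apply div_nonneg <;> linarith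
      positivity
  have := intervalIntegral.norm_integral_le_of_norm_le_const key
  rw [Real.norm_eq_abs] at this
  unfold grunJ
  calc |∫ t in (0:ℝ)..z, (1-t)^(β-(n:ℝ)-1) * (z-t)^n| ≤ z^n * |z - 0| := this
    _ = z^n * z := by rw [sub_zero, abs_of_nonneg hz0]

lemma hasSum_w_mul_pow (β z : ℝ) (hβ1 : 1 < β) (hβ2 : β < 2) (hz0 : 0 ≤ z) (hz1 : z ≤ 1) :
    HasSum (fun k : ℕ => grunwaldW β k * z ^ k) ((1 - z) ^ β) := by
  -- summability
  have hsum : Summable (fun k : ℕ => grunwaldW β k * z ^ k) := by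
    apply Summable.of_abs
    apply Summable.of_nonneg_of_le (fun k => abs_nonneg _) (f := fun k => |grunwaldW β k|)
      (fun k => ?_) (summable_abs_w β hβ1 hβ2)
    rw [abs_mul]
    calc |grunwaldW β k| * |z^k| ≤ |grunwaldW β k| * 1 := by
          apply mul_le_mul_of_nonneg_left _ (abs_nonneg _)
          rw [abs_pow, abs_of_nonneg hz0]
          exact pow_le_one₀ hz0 hz1
      _ = |grunwaldW β k| := mul_one _
  -- partial sums tend to (1-z)^β
  have hlim : Filter.Tendsto (fun n : ℕ => ∑ k ∈ Finset.range (n+1), grunwaldW β k * z^k)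
      Filter.atTop (nhds ((1-z)^β)) := by
    rcases eq_or_lt_of_le hz1 with hz | hz
    · -- z = 1
      subst hz
      have hβ0 : β ≠ 0 := by intro h; rw [h] at hβ1; linarith
      simp only [one_pow, mul_one, sub_self, Real.zero_rpow hβ0, sum_w]
      have hbnd : ∀ᶠ n : ℕ in Filter.atTop, ‖grunwaldW (β-1) n‖ ≤ (β-1)/n := by
        filter_upwards [Filter.eventually_ge_atTop 1] with n hn
        obtain ⟨h1, h2⟩ := u_bounds β hβ1 hβ2 n hn
        rw [Real.norm_eq_abs, abs_of_nonpos h2]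
        linarith
      refine squeeze_zero_norm' hbnd ?_
      exact tendsto_const_div_atTop_nhds_zero_nat (β-1)
    · -- z < 1
      have heq : ∀ n : ℕ, ∑ k ∈ Finset.range (n+1), grunwaldW β k * z^k
          = (1-z)^β - ((n:ℝ)+1) * grunwaldW β (n+1) * grunJ β z n := by
        intro n
        have := taylor_id β z hβ1 hβ2 hz0 hz n
        linarith [this]
      simp only [heq]
      have hR : Filter.Tendsto (fun n : ℕ => ((n:ℝ)+1) * grunwaldW β (n+1) * grunJ β z n)
          Filter.atTop (nhds 0) := by
        have hbnd : ∀ᶠ n : ℕ in Filter.atTop,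
            ‖((n:ℝ)+1) * grunwaldW β (n+1) * grunJ β z n‖ ≤ (β*(β-1)*z) * z^n := by
          filter_upwards [Filter.eventually_ge_atTop 1] with n hn
          obtain ⟨hw0, hw2⟩ := w_bounds β hβ1 hβ2 n hn
          have hn' : (1:ℝ) ≤ (n:ℝ) := by exact_mod_cast hn
          rw [Real.norm_eq_abs, abs_mul, abs_mul]
          have h1 : |((n:ℝ)+1)| = (n:ℝ)+1 := abs_of_nonneg (by positivity)
          have h2 : |grunwaldW β (n+1)| = grunwaldW β (n+1) := abs_of_nonneg hw0
          rw [h1, h2]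
          have hJ := grunJ_bound β z hβ1 hz0 hz n
          have hwb : ((n:ℝ)+1) * grunwaldW β (n+1) ≤ β*(β-1) := by
            calc ((n:ℝ)+1) * grunwaldW β (n+1) ≤ ((n:ℝ)+1) * (β*(β-1)/(((n:ℝ)+1)*n)) :=
                  mul_le_mul_of_nonneg_left hw2 (by positivity)
              _ = β*(β-1)/n := by field_simp
              _ ≤ β*(β-1) := by
                  rw [div_le_iff₀ (by positivity)]
                  nlinarith [mul_nonneg (mul_nonneg (by linarith : (0:ℝ) ≤ β)
                    (by linarith : (0:ℝ) ≤ β-1)) (by linarith : (0:ℝ) ≤ (n:ℝ)-1)]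
          calc ((n:ℝ)+1) * grunwaldW β (n+1) * |grunJ β z n|
              ≤ (β*(β-1)) * (z^n * z) := by
                apply mul_le_mul hwb hJ (abs_nonneg _) (by nlinarith)
            _ = (β*(β-1)*z) * z^n := by ring
        refine squeeze_zero_norm' hbnd ?_
        have : Filter.Tendsto (fun n : ℕ => z^n) Filter.atTop (nhds 0) :=
          tendsto_pow_atTop_nhds_zero_of_lt_one hz0 hz
        simpa using this.const_mul (β*(β-1)*z)
      have : Filter.Tendsto (fun n : ℕ => (1-z)^β - (((n:ℝ)+1) * grunwaldW β (n+1) * grunJ β z n))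
          Filter.atTop (nhds ((1-z)^β - 0)) := Filter.Tendsto.const_sub _ hR
      simpa using this
  -- conclude
  have h1 : HasSum (fun k : ℕ => grunwaldW β k * z ^ k) (∑' k, grunwaldW β k * z ^ k) :=
    hsum.hasSum
  have h2 := h1.tendsto_sum_nat
  have h3 : Filter.Tendsto (fun n : ℕ => ∑ k ∈ Finset.range (n+1), grunwaldW β k * z^k)
      Filter.atTop (nhds (∑' k, grunwaldW β k * z ^ k)) :=
    h2.comp (Filter.tendsto_add_atTop_nat 1)
  have := tendsto_nhds_unique h3 hlim
  rwa [this] at h1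

noncomputable def shiftB (c : ℝ) (W : ℕ → ℝ) : ℕ → ℝ
  | 0 => 0
  | k+1 => c * W k

noncomputable def shiftC (c : ℝ) (W : ℕ → ℝ) : ℕ → ℝ
  | 0 => 0
  | 1 => 0
  | k+2 => c * W k

lemma hasSum_shiftB (c S : ℝ) (W : ℕ → ℝ) (hW : HasSum W S) :
    HasSum (shiftB c W) (c*S) := by
  have h1 : HasSum (fun n : ℕ => shiftB c W (n+1)) (c*S) := by
    simpa [shiftB] using hW.mul_left c
  have := (hasSum_nat_add_iff (f := shiftB c W) 1).mp h1
  simpa [shiftB] using this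

lemma hasSum_shiftC (c S : ℝ) (W : ℕ → ℝ) (hW : HasSum W S) :
    HasSum (shiftC c W) (c*S) := by
  have h1 : HasSum (fun n : ℕ => shiftC c W (n+2)) (c*S) := by
    simpa [shiftC] using hW.mul_left c
  have := (hasSum_nat_add_iff (f := shiftC c W) 2).mp h1
  simpa [shiftC, Finset.sum_range_succ] using this

lemma summable_abs_shiftB (c : ℝ) (W : ℕ → ℝ) (hW : Summable (fun k => |W k|)) :
    Summable (fun k => |shiftB c W k|) := by
  apply (summable_nat_add_iff (f := fun k => |shiftB c W k|) 1).mp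
  have : (fun n : ℕ => |shiftB c W (n+1)|) = fun n => |c| * |W n| := by
    funext n; simp [shiftB, abs_mul]
  rw [this]
  exact hW.mul_left _

lemma summable_abs_shiftC (c : ℝ) (W : ℕ → ℝ) (hW : Summable (fun k => |W k|)) :
    Summable (fun k => |shiftC c W k|) := by
  apply (summable_nat_add_iff (f := fun k => |shiftC c W k|) 2).mp
  have : (fun n : ℕ => |shiftC c W (n+2)|) = fun n => |c| * |W n| := by
    funext n; simp [shiftC, abs_mul]
  rw [this]
  exact hW.mul_left _

theorem tempered_weights_sum (β lam h γ1 γ2 γ3 : ℝ)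
    (hβ1 : 1 < β) (hβ2 : β < 2) (hlam : 0 ≤ lam) (hh : 0 < h) :
    Summable (fun k : ℕ => |temperedG β lam h γ1 γ2 γ3 k|) ∧
    HasSum (temperedG β lam h γ1 γ2 γ3)
      ((γ1 * Real.exp (h * lam) + γ2 + γ3 * Real.exp (-(h * lam))) *
        (1 - Real.exp (-(h * lam))) ^ β) := by
  set z := Real.exp (-(h * lam)) with hzdef
  have hz0 : 0 < z := Real.exp_pos _
  have hz1 : z ≤ 1 := by
    rw [hzdef]
    apply Real.exp_le_one_iff.mpr
    have : 0 ≤ h * lam := by positivity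
    linarith
  have hzi : Real.exp (h * lam) = z⁻¹ := by rw [hzdef, ← Real.exp_neg, neg_neg]
  set W : ℕ → ℝ := fun k => grunwaldW β k * z ^ k with hWdef
  set S : ℝ := (1 - z) ^ β with hSdef
  have hW : HasSum W S := hasSum_w_mul_pow β z hβ1 hβ2 (le_of_lt hz0) hz1
  have hWabs : Summable (fun k => |W k|) := by
    refine Summable.of_nonneg_of_le (f := fun k => |grunwaldW β k|)
      (fun k => abs_nonneg _) (fun k => ?_) (summable_abs_w β hβ1 hβ2)
    rw [hWdef]
    simp only [abs_mul]
    calc |grunwaldW β k| * |z^k| ≤ |grunwaldW β k| * 1 := by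
          apply mul_le_mul_of_nonneg_left _ (abs_nonneg _)
          rw [abs_pow, abs_of_nonneg (le_of_lt hz0)]
          exact pow_le_one₀ (le_of_lt hz0) hz1
      _ = |grunwaldW β k| := mul_one _
  have hzpow : ∀ k : ℕ, Real.exp (-(((k:ℝ)+1) * (h*lam))) = z^(k+1) := by
    intro k
    rw [hzdef, ← Real.exp_nat_mul]
    congr 1
    push_cast
    ring
  have hgeq : temperedG β lam h γ1 γ2 γ3
      = fun k => (γ1 * z⁻¹) * W k + (shiftB γ2 W k + shiftC (γ3 * z) W k) := by
    funext k
    match k with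
    | 0 =>
      simp only [temperedG, shiftB, shiftC, hWdef, w_zero, pow_zero, mul_one, hzi]
      ring
    | 1 =>
      simp only [temperedG, shiftB, shiftC, hWdef, w_zero, pow_zero, pow_one, mul_one, hzi]
      field_simp
      ring
    | (k+2) =>
      simp only [temperedG, shiftB, shiftC, hWdef, hzpow k]
      field_simp
      ring
  constructor
  · rw [hgeq]
    refine Summable.of_nonneg_of_le
      (f := fun k => |γ1 * z⁻¹| * |W k| + (|shiftB γ2 W k| + |shiftC (γ3 * z) W k|))
      (fun k => abs_nonneg _) (fun k => ?_) ?_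
    · calc |(γ1 * z⁻¹) * W k + (shiftB γ2 W k + shiftC (γ3 * z) W k)|
          ≤ |(γ1 * z⁻¹) * W k| + |shiftB γ2 W k + shiftC (γ3 * z) W k| := abs_add_le _ _
        _ ≤ |(γ1 * z⁻¹) * W k| + (|shiftB γ2 W k| + |shiftC (γ3 * z) W k|) := by
            have := abs_add_le (shiftB γ2 W k) (shiftC (γ3 * z) W k)
            linarith
        _ = |γ1 * z⁻¹| * |W k| + (|shiftB γ2 W k| + |shiftC (γ3 * z) W k|) := by
            rw [abs_mul]
    · exact (hWabs.mul_left _).add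
        ((summable_abs_shiftB γ2 W hWabs).add (summable_abs_shiftC (γ3 * z) W hWabs))
  · rw [hgeq]
    have hsum := ((hW.mul_left (γ1 * z⁻¹)).add
      ((hasSum_shiftB γ2 S W hW).add (hasSum_shiftC (γ3 * z) S W hW)))
    have hval : (γ1 * z⁻¹) * S + (γ2 * S + (γ3 * z) * S)
        = (γ1 * Real.exp (h * lam) + γ2 + γ3 * Real.exp (-(h * lam))) * (1 - Real.exp (-(h * lam))) ^ β := by
      rw [hzi, ← hzdef, ← hSdef]
      ring
    rwa [hval] at hsum
end
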